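/- Let a, b, c be positive integers forming a Heronian triangle, i.e. there exists d ∈ ℚ with (4d)^2 = (a+b+c)(a+b−c)(a−b+c)(−a+b+c). Then there exist lattice points P, Q, R : Fin 2 → ℤ with ∑ k, (P k − Q k)^2 = a^2, ∑ k, (P k − R k)^2 = b^2, and ∑ k, (Q k − R k)^2 = c^2. -/

import Mathlib

open Zsqrtd

set_option synthInstance.maxHeartbeats 1000000 in
set_option maxHeartbeats 1000000 in
/-- An element of `ℤ[i]` whose norm is prime is prime. -/
lemma gi_prime_of_norm_prime {z : GaussianInt} (h : Prime (Zsqrtd.norm z)) : Prime z := by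
  rw [← _root_.irreducible_iff_prime]
  constructor
  · intro hu
    exact h.not_unit (Int.isUnit_iff_natAbs_eq.2 (Zsqrtd.norm_eq_one_iff.2 hu))
  · intro u v huv
    have hnorm : Zsqrtd.norm z = Zsqrtd.norm u * Zsqrtd.norm v := by
      rw [huv, Zsqrtd.norm_mul]
    rcases h.irreducible.isUnit_or_isUnit hnorm with hu | hv
    · exact Or.inl (Zsqrtd.norm_eq_one_iff.1 (Int.isUnit_iff_natAbs_eq.1 hu))
    · exact Or.inr (Zsqrtd.norm_eq_one_iff.1 (Int.isUnit_iff_natAbs_eq.1 hv))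

lemma gi_star_dvd {x y : GaussianInt} (h : x ∣ star y) : star x ∣ y := by
  rcases h with ⟨k, hk⟩
  exact ⟨star k, by rw [← star_star y, hk, star_mul']⟩

/-- Key splitting lemma: a Gaussian integer of norm `a² b²` factors as
`z₁ * star z₂` with norms `a²` and `b²`. -/
lemma gi_split (b : ℕ) : ∀ a : ℕ, ∀ w : GaussianInt,
    Zsqrtd.norm w = (a : ℤ) ^ 2 * (b : ℤ) ^ 2 →
    ∃ z₁ z₂ : GaussianInt, Zsqrtd.norm z₁ = (a : ℤ) ^ 2 ∧
      Zsqrtd.norm z₂ = (b : ℤ) ^ 2 ∧ w = z₁ * star z₂ := by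
  intro a
  induction a using Nat.strong_induction_on with
  | _ a ih =>
  intro w hw
  rcases Nat.lt_or_ge a 2 with h2 | h2
  · interval_cases a
    · -- a = 0
      refine ⟨0, (b : GaussianInt), by simp [Zsqrtd.norm], ?_, ?_⟩
      · rw [Zsqrtd.norm_natCast]; ring
      · have hw0 : w = 0 := by
          have h0 : Zsqrtd.norm w = 0 := by simpa using hw
          exact (Zsqrtd.norm_eq_zero_iff (by norm_num) w).1 h0
        simp [hw0]
    · -- a = 1
      refine ⟨1, star w, by simp [Zsqrtd.norm_one], ?_, by simp⟩
      rw [Zsqrtd.norm_conj, hw]; push_cast; ring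
  · -- a ≥ 2
    set p := a.minFac with hpdef
    have hp : p.Prime := Nat.minFac_prime (by omega)
    haveI : Fact p.Prime := ⟨hp⟩
    obtain ⟨a', ha2⟩ : p ∣ a := a.minFac_dvd
    have hp2 : 2 ≤ p := hp.two_le
    have ha' : a' ≠ 0 := by rintro rfl; omega
    have hacast : (a : ℤ) = (p : ℤ) * (a' : ℤ) := by exact_mod_cast congrArg (Nat.cast (R := ℤ)) ha2
    rw [hacast] at hw
    have hpnw : (p : ℤ) ∣ Zsqrtd.norm w := by
      rw [hw]; exact ⟨(p : ℤ) * (a' : ℤ) ^ 2 * (b : ℤ) ^ 2, by ring⟩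
    have hpww : ((p : ℕ) : GaussianInt) ∣ w * star w := by
      rw [← Zsqrtd.norm_eq_mul_conj]
      obtain ⟨k, hk⟩ := hpnw
      exact ⟨(k : GaussianInt), by rw [hk]; push_cast; ring⟩
    -- produce u with norm p² dividing w
    have claim : ∃ u : GaussianInt, Zsqrtd.norm u = (p : ℤ) ^ 2 ∧ u ∣ w := by
      by_cases hmod : p % 4 = 3
      · have hprime : Prime ((p : ℕ) : GaussianInt) :=
          (GaussianInt.prime_iff_mod_four_eq_three_of_nat_prime p).2 hmod
        have hpw : ((p : ℕ) : GaussianInt) ∣ w := by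
          rcases hprime.2.2 w (star w) hpww with h | h
          · exact h
          · have := gi_star_dvd h
            rwa [star_natCast] at this
        exact ⟨(p : GaussianInt), by rw [Zsqrtd.norm_natCast]; ring, hpw⟩
      · obtain ⟨m, n, hmn⟩ := Nat.Prime.sq_add_sq (p := p) hmod
        set π : GaussianInt := ⟨(m : ℤ), (n : ℤ)⟩ with hπdef
        have hπnorm : Zsqrtd.norm π = (p : ℤ) := by
          have : (m : ℤ) ^ 2 + (n : ℤ) ^ 2 = (p : ℤ) := by exact_mod_cast hmn
          rw [Zsqrtd.norm_def]; push_cast; linarith [this]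
        have hπprime : Prime π := gi_prime_of_norm_prime (by
          rw [hπnorm]; exact_mod_cast (Nat.prime_iff_prime_int.1 hp))
        have hconjnorm : Zsqrtd.norm (star π) = (p : ℤ) := by
          rw [Zsqrtd.norm_conj, hπnorm]
        -- get ρ prime with norm p dividing w
        have hρ : ∃ ρ : GaussianInt, Prime ρ ∧ Zsqrtd.norm ρ = (p : ℤ) ∧ ρ ∣ w := by
          have hπp : π ∣ ((p : ℕ) : GaussianInt) := by
            refine ⟨star π, ?_⟩
            have := Zsqrtd.norm_eq_mul_conj π
            rw [hπnorm] at this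
            exact_mod_cast this
          rcases hπprime.2.2 w (star w) (hπp.trans hpww) with h | h
          · exact ⟨π, hπprime, hπnorm, h⟩
          · exact ⟨star π, gi_prime_of_norm_prime (hconjnorm ▸ (by exact_mod_cast (Nat.prime_iff_prime_int.1 hp))),
              hconjnorm, gi_star_dvd h⟩
        obtain ⟨ρ, hρprime, hρnorm, w₁, rfl⟩ := hρ
        have hρconj : ρ * star ρ = ((p : ℕ) : GaussianInt) := by
          have := Zsqrtd.norm_eq_mul_conj ρ
          rw [hρnorm] at this
          exact_mod_cast this.symm
        have hpnw1 : (p : ℤ) ∣ Zsqrtd.norm w₁ := by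
          have h1 : Zsqrtd.norm ρ * Zsqrtd.norm w₁ = ((p : ℤ) * (a' : ℤ)) ^ 2 * (b : ℤ) ^ 2 := by
            rw [← Zsqrtd.norm_mul, hw]
          rw [hρnorm] at h1
          have h2 : Zsqrtd.norm w₁ = (p : ℤ) * ((a' : ℤ) ^ 2 * (b : ℤ) ^ 2) := by
            have hpne : (p : ℤ) ≠ 0 := by positivity
            apply mul_left_cancel₀ hpne
            rw [h1]; ring
          exact ⟨_, h2⟩
        have hpww1 : ((p : ℕ) : GaussianInt) ∣ w₁ * star w₁ := by
          rw [← Zsqrtd.norm_eq_mul_conj]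
          obtain ⟨k, hk⟩ := hpnw1
          exact ⟨(k : GaussianInt), by rw [hk]; push_cast; ring⟩
        have hρw1 : ρ ∣ w₁ ∨ star ρ ∣ w₁ := by
          have hρp : ρ ∣ ((p : ℕ) : GaussianInt) := ⟨star ρ, hρconj.symm⟩
          rcases hρprime.2.2 w₁ (star w₁) (hρp.trans hpww1) with h | h
          · exact Or.inl h
          · exact Or.inr (gi_star_dvd h)
        rcases hρw1 with h | h
        · obtain ⟨w₂, rfl⟩ := h
          refine ⟨ρ * ρ, by rw [Zsqrtd.norm_mul, hρnorm]; ring, ⟨w₂, by ring⟩⟩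
        · obtain ⟨w₂, rfl⟩ := h
          refine ⟨ρ * star ρ, by rw [Zsqrtd.norm_mul, hρnorm, Zsqrtd.norm_conj, hρnorm]; ring,
            ⟨w₂, by ring⟩⟩
    obtain ⟨u, hun, w', rfl⟩ := claim
    have hw' : Zsqrtd.norm w' = (a' : ℤ) ^ 2 * (b : ℤ) ^ 2 := by
      have h1 : Zsqrtd.norm u * Zsqrtd.norm w' = ((p : ℤ)) ^ 2 * ((a' : ℤ) ^ 2 * (b : ℤ) ^ 2) := by
        rw [← Zsqrtd.norm_mul, hw]; ring
      rw [hun] at h1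
      have hpne : ((p : ℤ)) ^ 2 ≠ 0 := by positivity
      exact mul_left_cancel₀ hpne h1
    have hlt : a' < a := by
      have h1a : 1 ≤ a' := by omega
      calc a' = 1 * a' := (one_mul a').symm
        _ < p * a' := by apply Nat.mul_lt_mul_of_lt_of_le <;> omega
        _ = a := ha2.symm
    obtain ⟨z₁, z₂, h1, h2, h3⟩ := ih a' hlt w' hw'
    refine ⟨u * z₁, z₂, ?_, h2, by rw [h3]; ring⟩
    rw [Zsqrtd.norm_mul, hun, h1, hacast]; ring

/-- Every Heronian triangle may be embedded congruently in the lattice `ℤ²`. -/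
theorem heronian_triangle_lattice_embedding (a b c : ℤ)
    (ha : 0 < a) (hb : 0 < b) (hc : 0 < c)
    (heron : ∃ d : ℚ, (4 * d) ^ 2 =
      ((a : ℚ) + b + c) * ((a : ℚ) + b - c) * ((a : ℚ) - b + c) * (-(a : ℚ) + b + c)) :
    ∃ P Q R : Fin 2 → ℤ,
      (∑ k, (P k - Q k) ^ 2 = a ^ 2) ∧
      (∑ k, (P k - R k) ^ 2 = b ^ 2) ∧
      (∑ k, (Q k - R k) ^ 2 = c ^ 2) := by
  obtain ⟨d, hd⟩ := heron
  set q : ℚ := 4 * d with hqdef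
  set N : ℤ := (a + b + c) * (a + b - c) * (a - b + c) * (-a + b + c) with hNdef
  have hq : q ^ 2 = (N : ℚ) := by rw [hqdef, hd, hNdef]; push_cast; ring
  have hden : q.den = 1 := by
    have h1 : (q ^ 2).den = 1 := by rw [hq]; exact Rat.den_intCast N
    rw [Rat.den_pow] at h1
    nlinarith [q.den_pos]
  have hqint : ((q.num : ℚ)) = q := by
    conv_rhs => rw [← Rat.num_div_den q]
    rw [hden]; simp
  set n : ℤ := q.num with hndef
  have hn2 : n ^ 2 = N := by
    have h1 : ((n : ℚ)) ^ 2 = ((N : ℤ) : ℚ) := by rw [hndef, hqint]; exact hq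
    exact_mod_cast h1
  have key : n ^ 2 + (a ^ 2 + b ^ 2 - c ^ 2) ^ 2 = 4 * a ^ 2 * b ^ 2 := by
    rw [hNdef] at hn2
    linear_combination hn2
  clear hd hq hden hqint hn2
  rcases Int.even_or_odd n with ⟨s, hs⟩ | ⟨s, hs⟩ <;>
    rcases Int.even_or_odd (a ^ 2 + b ^ 2 - c ^ 2) with ⟨t, htt⟩ | ⟨t, htt⟩
  · -- even, even : the main case
    rw [hs, htt] at key
    have hst : s ^ 2 + t ^ 2 = a ^ 2 * b ^ 2 := by
      have h4 : 4 * (s ^ 2 + t ^ 2) = 4 * (a ^ 2 * b ^ 2) := by linear_combination key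
      exact mul_left_cancel₀ (by norm_num) h4
    set A : ℕ := a.toNat with hAdef
    set B : ℕ := b.toNat with hBdef
    have hA : (A : ℤ) = a := Int.toNat_of_nonneg ha.le
    have hB : (B : ℤ) = b := Int.toNat_of_nonneg hb.le
    set w : GaussianInt := ⟨t, s⟩ with hwdef
    have hwnorm : Zsqrtd.norm w = (A : ℤ) ^ 2 * (B : ℤ) ^ 2 := by
      rw [Zsqrtd.norm_def, hA, hB]
      show t * t - (-1) * s * s = a ^ 2 * b ^ 2
      linear_combination hst
    obtain ⟨z₁, z₂, h1, h2, h3⟩ := gi_split B A w hwnorm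
    rw [hA] at h1
    rw [hB] at h2
    rw [Zsqrtd.norm_def] at h1 h2
    have ht : t = z₁.re * z₂.re + z₁.im * z₂.im := by
      have h4 := congrArg Zsqrtd.re h3
      simp only [Zsqrtd.re_mul, Zsqrtd.re_star, Zsqrtd.im_star] at h4
      linear_combination h4
    refine ⟨fun _ => 0, ![z₁.re, z₁.im], ![z₂.re, z₂.im], ?_, ?_, ?_⟩
    · simp only [Fin.sum_univ_two, Matrix.cons_val_zero, Matrix.cons_val_one, Matrix.head_cons]
      linear_combination h1
    · simp only [Fin.sum_univ_two, Matrix.cons_val_zero, Matrix.cons_val_one, Matrix.head_cons]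
      linear_combination h2
    · simp only [Fin.sum_univ_two, Matrix.cons_val_zero, Matrix.cons_val_one, Matrix.head_cons]
      linear_combination h1 + h2 + 2 * ht + htt
  · -- even, odd : impossible
    rw [hs, htt] at key
    exfalso
    have h41 : (4 : ℤ) ∣ 1 := ⟨a ^ 2 * b ^ 2 - s * s - t ^ 2 - t, by linear_combination key⟩
    norm_num at h41
  · -- odd, even : impossible
    rw [hs, htt] at key
    exfalso
    have h41 : (4 : ℤ) ∣ 1 := ⟨a ^ 2 * b ^ 2 - s ^ 2 - s - t * t, by linear_combination key⟩
    norm_num at h41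
  · -- odd, odd : impossible
    rw [hs, htt] at key
    exfalso
    have h41 : (4 : ℤ) ∣ 2 := ⟨a ^ 2 * b ^ 2 - s ^ 2 - s - t ^ 2 - t, by linear_combination key⟩
    norm_num at h41
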